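/- Under the sensor setup and posterior definitions, with A = Σ^f (P^f)^{-1}, it holds that Σ^t − Σ^f = Σ^f (Φ^t − Φ^f) Σ^f − A ΔQ A^T. Moreover, Φ^t − Φ^f = Σ_{j=1}^N a_j H_j^T (R_j^u)^{-1} ((a_j − 1)·I_{m_j} − a_j ΔR_j (R_j^u)^{-1}) H_j. (Proposition 2 of the paper.) -/

import Mathlib

open Matrix

lemma smul_posSemidef' {m : ℕ} {A : Matrix (Fin m) (Fin m) ℝ} (hA : A.PosSemidef)
    {c : ℝ} (hc : 0 ≤ c) : (c • A).PosSemidef := by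
  constructor
  · unfold Matrix.IsHermitian
    rw [conjTranspose_smul, hA.1]
    simp
  · intro x
    exact (hA.smul hc).2 x

/-- Proposition 2 of the paper: with `A = Σᶠ (Pᶠ)⁻¹`,
`Σᵗ − Σᶠ = Σᶠ (Φᵗ − Φᶠ) Σᶠ − A ΔQ Aᵀ`, and
`Φᵗ − Φᶠ = ∑ⱼ aⱼ Hⱼᵀ (Rⱼᵘ)⁻¹ ((aⱼ−1) I − aⱼ ΔRⱼ (Rⱼᵘ)⁻¹) Hⱼ`. -/
theorem stmt2 {n N : ℕ} (hn : 1 ≤ n) (hN : 1 ≤ N)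
    (md : Fin N → ℕ) (hmd : ∀ j, 1 ≤ md j)
    (H : ∀ j, Matrix (Fin (md j)) (Fin n) ℝ)
    (R Ru : ∀ j, Matrix (Fin (md j)) (Fin (md j)) ℝ)
    (hRsymm : ∀ j, (R j).IsSymm) (hRusymm : ∀ j, (Ru j).IsSymm)
    (hR : ∀ j, (R j).PosDef) (hRu : ∀ j, (Ru j).PosDef)
    (dR : ∀ j, Matrix (Fin (md j)) (Fin (md j)) ℝ)
    (hdR : ∀ j, dR j = Ru j - R j)
    (a : Fin N → ℝ) (ha : ∀ j, 0 ≤ a j)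
    (P dQ : Matrix (Fin n) (Fin n) ℝ) (hPsymm : P.IsSymm) (hP : P.PosDef)
    (hdQsymm : dQ.IsSymm)
    (Pf : Matrix (Fin n) (Fin n) ℝ) (hPfdef : Pf = P + dQ) (hPf : Pf.PosDef)
    (Phif Phi Phit : Matrix (Fin n) (Fin n) ℝ)
    (hPhif : Phif = ∑ j, a j • ((H j)ᵀ * (Ru j)⁻¹ * H j))
    (hPhi : Phi = ∑ j, a j • ((H j)ᵀ * (R j)⁻¹ * H j))
    (hPhit : Phit = ∑ j, (a j) ^ 2 • ((H j)ᵀ * (Ru j)⁻¹ * R j * (Ru j)⁻¹ * H j))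
    (Sig Sigf Sigt A : Matrix (Fin n) (Fin n) ℝ)
    (hSig : Sig = (P⁻¹ + Phi)⁻¹)
    (hSigf : Sigf = (Pf⁻¹ + Phif)⁻¹)
    (hSigt : Sigt = Sigf * Pf⁻¹ * P * Pf⁻¹ * Sigf + Sigf * Phit * Sigf)
    (hA : A = Sigf * Pf⁻¹) :
    Sigt - Sigf = Sigf * (Phit - Phif) * Sigf - A * dQ * Aᵀ ∧
    Phit - Phif = ∑ j, a j • ((H j)ᵀ * (Ru j)⁻¹ *
      ((a j - 1) • (1 : Matrix (Fin (md j)) (Fin (md j)) ℝ) - a j • (dR j * (Ru j)⁻¹)) * H j) := by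
  -- second part
  have part2 : Phit - Phif = ∑ j, a j • ((H j)ᵀ * (Ru j)⁻¹ *
      ((a j - 1) • (1 : Matrix (Fin (md j)) (Fin (md j)) ℝ) - a j • (dR j * (Ru j)⁻¹)) * H j) := by
    rw [hPhit, hPhif, ← Finset.sum_sub_distrib]
    refine Finset.sum_congr rfl fun j _ => ?_
    have h1 : dR j * (Ru j)⁻¹ = 1 - R j * (Ru j)⁻¹ := by
      rw [hdR, Matrix.sub_mul, mul_nonsing_inv _ (hRu j).det_pos.ne'.isUnit]
    have h2 : (a j - 1) • (1 : Matrix (Fin (md j)) (Fin (md j)) ℝ) - a j • (dR j * (Ru j)⁻¹)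
        = a j • (R j * (Ru j)⁻¹) - 1 := by
      rw [h1]; module
    rw [h2]
    simp [Matrix.mul_sub, Matrix.sub_mul, Matrix.mul_one, mul_smul_comm, smul_mul_assoc,
      smul_sub, smul_smul, Matrix.mul_assoc, sq]
  refine ⟨?_, part2⟩
  -- invertibility / symmetry facts
  have hPfdet : IsUnit Pf.det := hPf.det_pos.ne'.isUnit
  have hPfs : Pfᵀ = Pf := by rw [hPfdef, transpose_add, hPsymm, hdQsymm]
  have hPfinvs : (Pf⁻¹)ᵀ = Pf⁻¹ := by rw [transpose_nonsing_inv, hPfs]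
  have hPhifPSD : Phif.PosSemidef := by
    rw [hPhif]
    refine Finset.sum_induction _ _ (fun x y hx hy => hx.add hy) Matrix.PosSemidef.zero
      (fun j _ => smul_posSemidef' ?_ (ha j))
    have := ((hRu j).posSemidef.inv).conjTranspose_mul_mul_same (H j)
    rwa [conjTranspose_eq_transpose_of_trivial] at this
  have hK : (Pf⁻¹ + Phif).PosDef := (hPf.inv).add_posSemidef hPhifPSD
  have hKdet : IsUnit (Pf⁻¹ + Phif).det := hK.det_pos.ne'.isUnit
  have hS1 : Sigf * (Pf⁻¹ + Phif) = 1 := by rw [hSigf]; exact nonsing_inv_mul _ hKdet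
  have hPhifs : Phifᵀ = Phif := by
    rw [hPhif, transpose_sum]
    refine Finset.sum_congr rfl fun j _ => ?_
    rw [transpose_smul, transpose_mul, transpose_mul, transpose_transpose,
      transpose_nonsing_inv, hRusymm, Matrix.mul_assoc]
  have hSigfs : Sigfᵀ = Sigf := by
    rw [hSigf, transpose_nonsing_inv, transpose_add, hPfinvs, hPhifs]
  have hAT : (Sigf * Pf⁻¹)ᵀ = Pf⁻¹ * Sigf := by rw [transpose_mul, hPfinvs, hSigfs]
  -- key computation
  have hPP : P = Pf - dQ := by rw [hPfdef]; abel
  have key : Sigf * Pf⁻¹ * P * Pf⁻¹ * Sigf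
      = Sigf - Sigf * Phif * Sigf - Sigf * Pf⁻¹ * dQ * (Pf⁻¹ * Sigf) := by
    have e1 : Sigf * Pf⁻¹ * Pf = Sigf := by
      rw [Matrix.mul_assoc, nonsing_inv_mul _ hPfdet, Matrix.mul_one]
    have e2 : Sigf * Pf⁻¹ * Sigf = Sigf - Sigf * Phif * Sigf := by
      have : Sigf * Pf⁻¹ = Sigf * (Pf⁻¹ + Phif) - Sigf * Phif := by
        rw [Matrix.mul_add]; abel
      rw [this, hS1, Matrix.sub_mul, Matrix.one_mul]
    rw [hPP]
    simp only [Matrix.mul_sub, Matrix.sub_mul]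
    rw [e1, e2]
    simp only [Matrix.mul_assoc]
  rw [hSigt, hA, hAT, key]
  simp only [Matrix.mul_sub, Matrix.sub_mul, Matrix.mul_assoc]
  abel
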